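/- Let n ≥ 1. There exist constants C > 0 and c > 0 such that for every k ∈ ℕ and every λ > 3ν (where ν = 4k+2n), one has |χ̂_B(λ,k) − (−1)^k·(sin λ/λ^{n+1})·2^{(3n+1)/2}| ≤ C·(|sin λ|/λ^{n+1})·ν^{−(n−1)/2}·λ^{n/2−1}·e^{−cλ}. -/

import Mathlib

open MeasureTheory Complex

noncomputable section

/-- The generalized Laguerre polynomials
`L_k^δ(t) = t^{−δ} e^t (1/k!) (d/dt)^k (e^{−t} t^{k+δ})`. -/
def genLaguerre (k : ℕ) (δ : ℝ) (t : ℝ) : ℝ :=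
  t ^ (-δ) * Real.exp t * ((k.factorial : ℝ))⁻¹ *
    iteratedDeriv k (fun s => Real.exp (-s) * s ^ ((k : ℝ) + δ)) t

/-- The normalizing constant `r_k = (k!/(n+k−1)!)^{1/2}`. -/
def rk (n k : ℕ) : ℝ := Real.sqrt ((k.factorial : ℝ) / ((n + k - 1).factorial : ℝ))

/-- The Laguerre functions `Λ_k^{n−1}(t) = r_k L_k^{n−1}(t) e^{−t/2} t^{(n−1)/2}`. -/
def lagFun (n k : ℕ) (t : ℝ) : ℝ :=
  rk n k * genLaguerre k ((n : ℝ) - 1) t * Real.exp (-t / 2) * t ^ (((n : ℝ) - 1) / 2)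

/-- The radial Fourier coefficient
`f̂(λ,k) = r_k ∫₀^∞ f_#^λ(r) (|λ|r²)^{(1−n)/2} Λ_k^{n−1}(|λ|r²/2) r^{2n−1} dr`,
where `f_#^λ(r) = ∫_ℝ f_#(r,t) e^{iλt} dt`. -/
def radialCoeff (n : ℕ) (fsharp : ℝ → ℝ → ℂ) (lam : ℝ) (k : ℕ) : ℂ :=
  (rk n k : ℂ) * ∫ r in Set.Ioi (0 : ℝ),
    (∫ t : ℝ, fsharp r t * Complex.exp (Complex.I * (lam : ℂ) * (t : ℂ))) *
      (((|lam| * r ^ 2) ^ ((1 - (n : ℝ)) / 2) : ℝ) : ℂ) *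
      ((lagFun n k (|lam| * r ^ 2 / 2) : ℝ) : ℂ) *
      ((r ^ (2 * (n : ℝ) - 1) : ℝ) : ℂ)

/-- `ν = 4k + 2n`. -/
def nuv (n k : ℕ) : ℕ := 4 * k + 2 * n

/-- The radial Fourier coefficient of the indicator of `B = {(z,t) : |z| ≤ 1, |t| ≤ 1}`:
`χ̂_B(λ,k) = r_k (sin λ/λ^{n+1}) (2ν)^{(n+1)/2} ∫₀^{λ/(2ν)} Λ_k^{n−1}(νt) t^{(n−1)/2} dt`. -/
def chiHatB (n k : ℕ) (lam : ℝ) : ℝ :=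
  rk n k * (Real.sin lam / lam ^ (n + 1)) *
    (2 * (nuv n k : ℝ)) ^ (((n : ℝ) + 1) / 2) *
    ∫ t in (0 : ℝ)..(lam / (2 * (nuv n k : ℝ))),
      lagFun n k ((nuv n k : ℝ) * t) * t ^ (((n : ℝ) - 1) / 2)

/-- The Japanese bracket `⟨x⟩ = (1+x²)^{1/2}`. -/
def jap (x : ℝ) : ℝ := Real.sqrt (1 + x ^ 2)

section ChiAuxiliary

open Finset Set Real


lemma hasDerivAt_exp_neg (t : ℝ) :
    HasDerivAt (fun s : ℝ => Real.exp (-s)) (-Real.exp (-t)) t := by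
  simpa [Function.comp_def] using (Real.hasDerivAt_exp (-t)).comp t (hasDerivAt_neg t)

lemma descFactorial_step {m k i : ℕ} (hk : k + 1 ≤ m) :
    k.choose (i+1) * m.descFactorial (k-i)
      = k.choose (i+1) * ((m - k + i + 1) * m.descFactorial (k - (i+1))) := by
  rcases lt_or_ge i k with h | h
  · have h1 : k - i = (k - (i+1)) + 1 := by omega
    rw [h1, Nat.descFactorial_succ]
    congr 2
    omega
  · simp [Nat.choose_eq_zero_of_lt (by omega : k < i+1)]

lemma iteratedDeriv_exp_neg_mul_pow (m : ℕ) :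
    ∀ k, k ≤ m → ∀ t : ℝ,
      iteratedDeriv k (fun s : ℝ => Real.exp (-s) * s ^ m) t
        = Real.exp (-t) * ∑ j ∈ Finset.range (k+1),
            (-1:ℝ)^j * (k.choose j : ℝ) * (m.descFactorial (k-j) : ℝ) * t^(m-k+j) := by
  intro k
  induction k with
  | zero => intro _ t; simp
  | succ k ih =>
    intro hk t
    have hk' : k ≤ m := by omega
    have hfun : iteratedDeriv k (fun s : ℝ => Real.exp (-s) * s ^ m)
        = fun t => Real.exp (-t) * ∑ j ∈ Finset.range (k+1),
            (-1:ℝ)^j * (k.choose j : ℝ) * (m.descFactorial (k-j) : ℝ) * t^(m-k+j) :=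
      funext (ih hk')
    rw [iteratedDeriv_succ, hfun]
    set a : ℕ → ℝ := fun j => (-1:ℝ)^j * (k.choose j : ℝ) * (m.descFactorial (k-j) : ℝ) with ha
    have hg : HasDerivAt (fun t : ℝ => ∑ j ∈ Finset.range (k+1), a j * t^(m-k+j))
        (∑ j ∈ Finset.range (k+1), a j * ((m-k+j : ℕ) * t^(m-k+j-1))) t := by
      apply HasDerivAt.fun_sum
      intro j _
      exact (hasDerivAt_pow (m-k+j) t).const_mul (a j)
    have H := (hasDerivAt_exp_neg t).fun_mul hg
    rw [H.deriv]
    have hS1 : (∑ j ∈ Finset.range (k+1), a j * ((m-k+j : ℕ) * t^(m-k+j-1)))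
        = ∑ j ∈ Finset.range (k+1+1), (a j * (m-k+j : ℕ)) * t^(m-(k+1)+j) := by
      conv_rhs => rw [Finset.sum_range_succ]
      have hz : a (k+1) = 0 := by simp [ha, Nat.choose_succ_self]
      rw [hz]
      simp only [zero_mul, add_zero]
      refine Finset.sum_congr rfl fun j hj => ?_
      have hj' : j ≤ k := by simpa [Nat.lt_succ_iff] using hj
      have he : m - k + j - 1 = m - (k+1) + j := by omega
      rw [he]; ring
    have hS2 : (∑ j ∈ Finset.range (k+1), a j * t^(m-k+j))
        = ∑ j ∈ Finset.range (k+1+1),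
            (if j = 0 then (0:ℝ) else a (j-1)) * t^(m-(k+1)+j) := by
      conv_rhs => rw [Finset.sum_range_succ']
      simp only [Nat.succ_ne_zero, ite_false, ite_true, Nat.add_sub_cancel, zero_mul, add_zero]
      refine Finset.sum_congr rfl fun j hj => ?_
      have he : m - k + j = m - (k+1) + (j+1) := by omega
      rw [he]
    have key : (∑ j ∈ Finset.range (k+1+1), (a j * (m-k+j : ℕ)) * t^(m-(k+1)+j))
        - (∑ j ∈ Finset.range (k+1+1), (if j = 0 then (0:ℝ) else a (j-1)) * t^(m-(k+1)+j))
        = ∑ j ∈ Finset.range (k+1+1),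
            (-1:ℝ)^j * ((k+1).choose j : ℝ) * (m.descFactorial (k+1-j) : ℝ) * t^(m-(k+1)+j) := by
      rw [← Finset.sum_sub_distrib]
      refine Finset.sum_congr rfl fun j hj => ?_
      match j with
      | 0 =>
        have h0 : m.descFactorial (k+1) = (m-k) * m.descFactorial k := Nat.descFactorial_succ m k
        simp only [ha, if_pos rfl, sub_zero, pow_zero, Nat.choose_zero_right, Nat.sub_zero,
          Nat.cast_one, one_mul, add_zero, h0]
        push_cast [Nat.cast_sub hk']
        ring
      | i+1 =>
        simp only [if_neg (Nat.succ_ne_zero i), Nat.add_sub_cancel, ha]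
        have hpas : ((k+1).choose (i+1) : ℝ) = (k.choose i : ℝ) + (k.choose (i+1) : ℝ) := by
          rw [Nat.choose_succ_succ]; push_cast; ring
        have hsub : k + 1 - (i+1) = k - i := by omega
        rw [hsub, hpas]
        have hstep := congrArg (Nat.cast : ℕ → ℝ) (descFactorial_step (m := m) (k := k) (i := i) hk)
        push_cast [Nat.cast_sub hk'] at hstep ⊢
        linear_combination ((-1:ℝ)^i * t^(m-(k+1)+(i+1))) * hstep
    rw [hS1, hS2] at *
    linear_combination Real.exp (-t) * key


lemma coeff_id (m k j : ℕ) (hj : j ≤ k) :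
    ((k.choose j : ℝ) * (m.descFactorial (k-j) : ℝ)) / (k.factorial : ℝ)
      = (m.choose (k-j) : ℝ) / (j.factorial : ℝ) := by
  have h1 : m.descFactorial (k-j) = (k-j).factorial * m.choose (k-j) :=
    Nat.descFactorial_eq_factorial_mul_choose m (k-j)
  have h2 := congrArg (Nat.cast : ℕ → ℝ) (Nat.choose_mul_factorial_mul_factorial hj)
  push_cast at h2
  have hf1 : (k.factorial : ℝ) ≠ 0 := Nat.cast_ne_zero.2 (Nat.factorial_ne_zero k)
  have hf2 : (j.factorial : ℝ) ≠ 0 := Nat.cast_ne_zero.2 (Nat.factorial_ne_zero j)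
  field_simp
  rw [h1]
  push_cast
  linear_combination (m.choose (k-j) : ℝ) * h2

lemma genLaguerre_eq (n k : ℕ) (hn : 1 ≤ n) {t : ℝ} (ht : 0 < t) :
    genLaguerre k ((n:ℝ)-1) t
      = ∑ j ∈ Finset.range (k+1),
          (-1:ℝ)^j * ((k+(n-1)).choose (k-j) : ℝ) / (j.factorial : ℝ) * t^j := by
  set m := k + (n-1) with hm
  have hkm : k ≤ m := by omega
  have hcast : (k:ℝ) + ((n:ℝ)-1) = (m:ℝ) := by
    rw [hm]; push_cast [Nat.cast_sub hn]; ring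
  have hfun : (fun s : ℝ => Real.exp (-s) * s ^ ((k:ℝ) + ((n:ℝ)-1)))
      = fun s => Real.exp (-s) * s ^ m := by
    funext s
    rw [hcast, Real.rpow_natCast]
  rw [genLaguerre, hfun, iteratedDeriv_exp_neg_mul_pow m k hkm]
  simp only [Finset.mul_sum]
  refine Finset.sum_congr rfl fun j hj => ?_
  have hj' : j ≤ k := by simpa [Nat.lt_succ_iff] using hj
  have hpow : t^(m-k+j) = t^(j:ℕ) * t^((n-1 : ℕ)) := by
    rw [← pow_add]; congr 1; omega
  have hrp : t ^ (-((n:ℝ)-1)) * t^((n-1:ℕ)) = 1 := by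
    rw [← Real.rpow_natCast t (n-1), Nat.cast_sub hn, Nat.cast_one,
      Real.rpow_neg ht.le]
    exact inv_mul_cancel₀ (ne_of_gt (Real.rpow_pos_of_pos ht _))
  have hco := coeff_id m k j hj'
  have : t ^ (-((n:ℝ)-1)) * Real.exp t * (k.factorial : ℝ)⁻¹ *
      (Real.exp (-t) * ((-1:ℝ)^j * (k.choose j : ℝ) * (m.descFactorial (k-j) : ℝ) * t^(m-k+j)))
      = ((-1:ℝ)^j * ((k.choose j : ℝ) * (m.descFactorial (k-j) : ℝ) / (k.factorial : ℝ)))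
        * (Real.exp t * Real.exp (-t)) * (t ^ (-((n:ℝ)-1)) * t^((n-1:ℕ))) * t^j := by
    rw [hpow]; ring
  rw [this, hrp, ← Real.exp_add, add_neg_cancel, Real.exp_zero, hco]
  ring

open MeasureTheory Set

lemma integral_pow_exp_half (p : ℕ) :
    ∫ s in Ioi (0:ℝ), s^p * Real.exp (-s/2) = (p.factorial : ℝ) * 2^(p+1) := by
  have h := Real.integral_rpow_mul_exp_neg_mul_Ioi (a := (p:ℝ)+1) (r := 1/2)
    (by positivity) (by norm_num)
  rw [show ((p:ℝ)+1)-1 = ((p:ℕ):ℝ) by ring] at h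
  simp_rw [Real.rpow_natCast] at h
  rw [Real.Gamma_nat_eq_factorial] at h
  rw [show ((1:ℝ)/(1/2)) = 2 by norm_num] at h
  rw [show ((p:ℝ)+1) = ((p+1 : ℕ):ℝ) by push_cast; ring, Real.rpow_natCast] at h
  rw [show (p.factorial:ℝ) * 2^(p+1) = 2^(p+1) * (p.factorial:ℝ) from mul_comm _ _, ← h]
  refine setIntegral_congr_fun measurableSet_Ioi fun s _ => ?_
  rw [show -(1/2 * s) = -s/2 by ring]

lemma pow_exp_bound (p : ℕ) {s : ℝ} (hs : 0 ≤ s) :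
    s^p * Real.exp (-s/2) ≤ 8^p * (p.factorial:ℝ) * Real.exp (-(3/8) * s) := by
  have hfp : (0:ℝ) < (p.factorial : ℝ) := by
    exact_mod_cast Nat.factorial_pos p
  have h1 : (s/8)^p / (p.factorial:ℝ) ≤ Real.exp (s/8) := by
    calc (s/8)^p / (p.factorial:ℝ)
        ≤ ∑ i ∈ Finset.range (p+1), (s/8)^i / (i.factorial:ℝ) := by
          refine Finset.single_le_sum (f := fun i => (s/8)^i / (i.factorial:ℝ))
            (fun i _ => by positivity) (Finset.self_mem_range_succ p)
      _ ≤ Real.exp (s/8) := Real.sum_le_exp_of_nonneg (by positivity) _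
  have h2 : s^p ≤ 8^p * (p.factorial:ℝ) * Real.exp (s/8) := by
    have := mul_le_mul_of_nonneg_left h1 (by positivity : (0:ℝ) ≤ 8^p * (p.factorial:ℝ))
    calc s^p = 8^p * (p.factorial:ℝ) * ((s/8)^p / (p.factorial:ℝ)) := by
          rw [div_pow]; field_simp
      _ ≤ 8^p * (p.factorial:ℝ) * Real.exp (s/8) := this
  calc s^p * Real.exp (-s/2) ≤ (8^p * (p.factorial:ℝ) * Real.exp (s/8)) * Real.exp (-s/2) :=
        mul_le_mul_of_nonneg_right h2 (Real.exp_nonneg _)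
    _ = 8^p * (p.factorial:ℝ) * Real.exp (-(3/8) * s) := by
        rw [mul_assoc, ← Real.exp_add]; ring_nf

lemma integrableOn_pow_exp (p : ℕ) {a : ℝ} (ha : 0 ≤ a) :
    IntegrableOn (fun s : ℝ => s^p * Real.exp (-s/2)) (Ioi a) := by
  have hg : IntegrableOn (fun s : ℝ => 8^p * (p.factorial:ℝ) * Real.exp (-(3/8) * s)) (Ioi a) :=
    (exp_neg_integrableOn_Ioi a (by norm_num : (0:ℝ) < 3/8)).const_mul _
  refine hg.mono' ?_ ?_
  · exact ((continuous_pow p).mul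
      (Real.continuous_exp.comp (by fun_prop))).aestronglyMeasurable
  · filter_upwards [ae_restrict_mem measurableSet_Ioi] with s hs
    have hs0 : (0:ℝ) ≤ s := le_trans ha (le_of_lt hs)
    rw [Real.norm_eq_abs, _root_.abs_of_nonneg (by positivity)]
    exact pow_exp_bound p hs0

lemma integral_exp_tail (S : ℝ) :
    ∫ s in Ioi S, Real.exp (-(3/8) * s) = (8/3) * Real.exp (-(3/8) * S) := by
  have h := integral_comp_mul_left_Ioi (fun x => Real.exp (-x)) S
    (b := 3/8) (by norm_num)
  simp only [smul_eq_mul] at h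
  rw [integral_exp_neg_Ioi] at h
  calc ∫ s in Ioi S, Real.exp (-(3/8) * s)
      = ∫ s in Ioi S, Real.exp (-(3/8 * s)) := by
        refine setIntegral_congr_fun measurableSet_Ioi fun s _ => by ring_nf
    _ = (3/8:ℝ)⁻¹ * Real.exp (-(3/8 * S)) := h
    _ = (8/3) * Real.exp (-(3/8) * S) := by norm_num

lemma collapse_nat (n k j : ℕ) (hj : j ≤ k) :
    (k+(n-1)).choose (k-j) * (j+(n-1)).factorial * k.factorial
      = (k+(n-1)).factorial * k.choose j * j.factorial := by
  have hA : (k+(n-1)).choose (k-j) * (k-j).factorial * (j+(n-1)).factorial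
      = (k+(n-1)).factorial := by
    have := Nat.choose_mul_factorial_mul_factorial
      (show k-j ≤ k+(n-1) by omega)
    rwa [show k+(n-1)-(k-j) = j+(n-1) by omega] at this
  have hB : k.choose j * j.factorial * (k-j).factorial = k.factorial :=
    Nat.choose_mul_factorial_mul_factorial hj
  have hpos : 0 < (k-j).factorial := Nat.factorial_pos _
  apply Nat.eq_of_mul_eq_mul_right hpos
  calc (k+(n-1)).choose (k-j) * (j+(n-1)).factorial * k.factorial * (k-j).factorial
      = ((k+(n-1)).choose (k-j) * (k-j).factorial * (j+(n-1)).factorial) * k.factorial := by ring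
    _ = (k+(n-1)).factorial * k.factorial := by rw [hA]
    _ = (k+(n-1)).factorial * (k.choose j * j.factorial * (k-j).factorial) := by rw [hB]
    _ = (k+(n-1)).factorial * k.choose j * j.factorial * (k-j).factorial := by ring

lemma collapse_real (n k j : ℕ) (hj : j ≤ k) :
    ((k+(n-1)).choose (k-j) : ℝ) * ((j+(n-1)).factorial : ℝ) / (j.factorial : ℝ)
      = ((k+(n-1)).factorial : ℝ) / (k.factorial : ℝ) * (k.choose j : ℝ) := by
  have h := congrArg (Nat.cast : ℕ → ℝ) (collapse_nat n k j hj)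
  push_cast at h
  have hf1 : (k.factorial : ℝ) ≠ 0 := Nat.cast_ne_zero.2 (Nat.factorial_ne_zero k)
  have hf2 : (j.factorial : ℝ) ≠ 0 := Nat.cast_ne_zero.2 (Nat.factorial_ne_zero j)
  field_simp
  linear_combination h

def Ppoly (n k : ℕ) (s : ℝ) : ℝ :=
  ∑ j ∈ Finset.range (k+1), (-1:ℝ)^j * ((k+(n-1)).choose (k-j) : ℝ) / (j.factorial : ℝ) * s^j

def Gfun (n k : ℕ) (s : ℝ) : ℝ := Ppoly n k s * Real.exp (-s/2) * s^(n-1)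

lemma Gfun_eq (n k : ℕ) (s : ℝ) :
    Gfun n k s = ∑ j ∈ Finset.range (k+1),
      (-1:ℝ)^j * ((k+(n-1)).choose (k-j) : ℝ) / (j.factorial : ℝ)
        * (s^(j+(n-1)) * Real.exp (-s/2)) := by
  rw [Gfun, Ppoly, Finset.sum_mul, Finset.sum_mul]
  refine Finset.sum_congr rfl fun j _ => ?_
  rw [pow_add]; ring

lemma integrableOn_Gfun (n k : ℕ) {a : ℝ} (ha : 0 ≤ a) :
    IntegrableOn (fun s => Gfun n k s) (Ioi a) := by
  have : IntegrableOn (fun s : ℝ => ∑ j ∈ Finset.range (k+1),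
      (-1:ℝ)^j * ((k+(n-1)).choose (k-j) : ℝ) / (j.factorial : ℝ)
        * (s^(j+(n-1)) * Real.exp (-s/2))) (Ioi a) := by
    apply MeasureTheory.integrable_finset_sum
    intro j _
    exact ((integrableOn_pow_exp (j+(n-1)) ha).const_mul _)
  simpa only [← Gfun_eq] using this

lemma binom_sum_real (x : ℝ) (k : ℕ) :
    ∑ j ∈ Finset.range (k+1), (k.choose j : ℝ) * x^j = (x+1)^k := by
  have h := add_pow x 1 k
  simp only [one_pow, mul_one] at h
  rw [h]
  exact Finset.sum_congr rfl fun j _ => by ring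

lemma integral_Gfun (n k : ℕ) (hn : 1 ≤ n) :
    ∫ s in Ioi (0:ℝ), Gfun n k s
      = (-1:ℝ)^k * 2^n * ((k+(n-1)).factorial : ℝ) / (k.factorial : ℝ) := by
  simp_rw [Gfun_eq]
  rw [MeasureTheory.integral_finset_sum _
    (fun j _ => ((integrableOn_pow_exp (j+(n-1)) le_rfl).const_mul _))]
  have hterm : ∀ j ∈ Finset.range (k+1),
      (∫ s in Ioi (0:ℝ), (-1:ℝ)^j * ((k+(n-1)).choose (k-j) : ℝ) / (j.factorial : ℝ)
        * (s^(j+(n-1)) * Real.exp (-s/2)))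
      = (((k+(n-1)).factorial : ℝ) / (k.factorial : ℝ)) * 2^n * ((k.choose j : ℝ) * (-2)^j) := by
    intro j hj
    have hj' : j ≤ k := by simpa [Nat.lt_succ_iff] using hj
    rw [MeasureTheory.integral_const_mul, integral_pow_exp_half]
    have h2 : (2:ℝ)^(j+(n-1)+1) = 2^j * 2^n := by
      rw [← pow_add]; congr 1; omega
    rw [h2]
    have hc := collapse_real n k j hj'
    have hneg : ((-2:ℝ))^j = (-1)^j * 2^j := by
      rw [show (-2:ℝ) = (-1) * 2 by norm_num, mul_pow]
    rw [hneg]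
    field_simp at hc ⊢
    linear_combination hc
  rw [Finset.sum_congr rfl hterm, ← Finset.mul_sum, binom_sum_real (-2) k]
  norm_num
  ring

lemma Kcoef_eq (n k : ℕ) :
    ∑ j ∈ Finset.range (k+1),
        ((k+(n-1)).choose (k-j) : ℝ) / (j.factorial : ℝ)
          * (8^(j+(n-1)) * ((j+(n-1)).factorial : ℝ))
      = 8^(n-1) * 9^k * ((k+(n-1)).factorial : ℝ) / (k.factorial : ℝ) := by
  have hterm : ∀ j ∈ Finset.range (k+1),
      ((k+(n-1)).choose (k-j) : ℝ) / (j.factorial : ℝ)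
          * (8^(j+(n-1)) * ((j+(n-1)).factorial : ℝ))
        = (((k+(n-1)).factorial : ℝ) / (k.factorial : ℝ) * 8^(n-1)) * ((k.choose j : ℝ) * 8^j) := by
    intro j hj
    have hj' : j ≤ k := by simpa [Nat.lt_succ_iff] using hj
    have hc := collapse_real n k j hj'
    have h8 : (8:ℝ)^(j+(n-1)) = 8^j * 8^(n-1) := by rw [← pow_add]
    rw [h8]
    have hf2 : (j.factorial : ℝ) ≠ 0 := Nat.cast_ne_zero.2 (Nat.factorial_ne_zero j)
    have hf1 : (k.factorial : ℝ) ≠ 0 := Nat.cast_ne_zero.2 (Nat.factorial_ne_zero k)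
    field_simp at hc ⊢
    linear_combination hc
  rw [Finset.sum_congr rfl hterm, ← Finset.mul_sum, binom_sum_real 8 k]
  norm_num
  ring

lemma Gfun_pointwise_bound (n k : ℕ) {s : ℝ} (hs : 0 ≤ s) :
    |Gfun n k s| ≤ (8^(n-1) * 9^k * ((k+(n-1)).factorial : ℝ) / (k.factorial : ℝ))
      * Real.exp (-(3/8) * s) := by
  rw [Gfun_eq]
  calc |∑ j ∈ Finset.range (k+1),
      (-1:ℝ)^j * ((k+(n-1)).choose (k-j) : ℝ) / (j.factorial : ℝ)
        * (s^(j+(n-1)) * Real.exp (-s/2))|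
      ≤ ∑ j ∈ Finset.range (k+1),
        |(-1:ℝ)^j * ((k+(n-1)).choose (k-j) : ℝ) / (j.factorial : ℝ)
          * (s^(j+(n-1)) * Real.exp (-s/2))| := Finset.abs_sum_le_sum_abs _ _
    _ ≤ ∑ j ∈ Finset.range (k+1),
        ((k+(n-1)).choose (k-j) : ℝ) / (j.factorial : ℝ)
          * (8^(j+(n-1)) * ((j+(n-1)).factorial : ℝ)) * Real.exp (-(3/8) * s) := by
        refine Finset.sum_le_sum fun j _ => ?_
        have habs : |(-1:ℝ)^j * ((k+(n-1)).choose (k-j) : ℝ) / (j.factorial : ℝ)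
            * (s^(j+(n-1)) * Real.exp (-s/2))|
            = ((k+(n-1)).choose (k-j) : ℝ) / (j.factorial : ℝ)
              * (s^(j+(n-1)) * Real.exp (-s/2)) := by
          rw [_root_.abs_mul, _root_.abs_div, _root_.abs_mul, _root_.abs_pow, _root_.abs_neg, _root_.abs_one, one_pow, one_mul]
          rw [_root_.abs_of_nonneg (by positivity : (0:ℝ) ≤ ((k+(n-1)).choose (k-j) : ℝ)),
            _root_.abs_of_nonneg (by positivity : (0:ℝ) ≤ (j.factorial : ℝ)),
            _root_.abs_of_nonneg (by positivity : (0:ℝ) ≤ s^(j+(n-1)) * Real.exp (-s/2))]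
        rw [habs, mul_assoc]
        refine mul_le_mul_of_nonneg_left ?_ (by positivity)
        have := pow_exp_bound (j+(n-1)) hs
        calc s^(j+(n-1)) * Real.exp (-s/2)
            ≤ 8^(j+(n-1)) * ((j+(n-1)).factorial:ℝ) * Real.exp (-(3/8) * s) := this
          _ = 8^(j+(n-1)) * ((j+(n-1)).factorial:ℝ) * Real.exp (-(3/8) * s) := rfl
    _ = (8^(n-1) * 9^k * ((k+(n-1)).factorial : ℝ) / (k.factorial : ℝ))
        * Real.exp (-(3/8) * s) := by
        rw [← Finset.sum_mul, Kcoef_eq]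

lemma tail_bound (n k : ℕ) {S : ℝ} (hS : 0 ≤ S) :
    |∫ s in Ioi S, Gfun n k s|
      ≤ (8/3) * 8^(n-1) * 9^k * ((k+(n-1)).factorial : ℝ) / (k.factorial : ℝ)
          * Real.exp (-(3/8) * S) := by
  set K : ℝ := 8^(n-1) * 9^k * ((k+(n-1)).factorial : ℝ) / (k.factorial : ℝ) with hK
  have hKnn : 0 ≤ K := by positivity
  have h1 : |∫ s in Ioi S, Gfun n k s| ≤ ∫ s in Ioi S, K * Real.exp (-(3/8) * s) := by
    rw [← Real.norm_eq_abs]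
    refine MeasureTheory.norm_integral_le_of_norm_le
      ((exp_neg_integrableOn_Ioi S (by norm_num : (0:ℝ) < 3/8)).const_mul K) ?_
    filter_upwards [ae_restrict_mem measurableSet_Ioi] with s hs
    rw [Real.norm_eq_abs]
    exact Gfun_pointwise_bound n k (le_trans hS (le_of_lt hs))
  rw [MeasureTheory.integral_const_mul, integral_exp_tail] at h1
  calc |∫ s in Ioi S, Gfun n k s| ≤ K * ((8/3) * Real.exp (-(3/8) * S)) := h1
    _ = (8/3) * 8^(n-1) * 9^k * ((k+(n-1)).factorial : ℝ) / (k.factorial : ℝ)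
        * Real.exp (-(3/8) * S) := by rw [hK]; ring

lemma interval_eq_full_sub_tail (n k : ℕ) {S : ℝ} (hS : 0 ≤ S) :
    ∫ s in (0:ℝ)..S, Gfun n k s
      = (∫ s in Ioi (0:ℝ), Gfun n k s) - ∫ s in Ioi S, Gfun n k s := by
  rw [intervalIntegral.integral_of_le hS]
  have hsplit : ∫ s in Ioi (0:ℝ), Gfun n k s
      = (∫ s in Ioc (0:ℝ) S, Gfun n k s) + ∫ s in Ioi S, Gfun n k s := by
    rw [← Set.Ioc_union_Ioi_eq_Ioi hS]
    exact MeasureTheory.setIntegral_union (Set.Ioc_disjoint_Ioi le_rfl) measurableSet_Ioi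
      ((integrableOn_Gfun n k le_rfl).mono_set Set.Ioc_subset_Ioi_self)
      (integrableOn_Gfun n k hS)
  linarith

lemma exp_11_5 : (9:ℝ) ≤ Real.exp (11/5) := by
  have e1 : (2.7182818283:ℝ) ≤ Real.exp 1 := le_of_lt Real.exp_one_gt_d9
  have h5 : Real.exp (11/5) ^ (5:ℕ) = Real.exp 1 ^ (11:ℕ) := by
    rw [← Real.exp_nat_mul, ← Real.exp_nat_mul]; norm_num
  have hpow : (9:ℝ)^(5:ℕ) ≤ Real.exp (11/5) ^ (5:ℕ) := by
    rw [h5]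
    calc (9:ℝ)^(5:ℕ) = 59049 := by norm_num
      _ ≤ (2.7182818283:ℝ)^(11:ℕ) := by norm_num
      _ ≤ Real.exp 1 ^ (11:ℕ) := pow_le_pow_left₀ (by norm_num) e1 11
  exact le_of_pow_le_pow_left₀ (by norm_num) (Real.exp_nonneg _) hpow

lemma final_num {lam : ℝ} (h6 : 6 ≤ lam) {k : ℕ} (hk : 12*(k:ℝ) ≤ lam) :
    (9:ℝ)^k * Real.exp (-(3/16) * lam)
      ≤ 480 * lam ^ (-(1:ℝ)/2) * Real.exp (-(1/480) * lam) := by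
  have hl0 : (0:ℝ) < lam := by linarith
  have h9k : (9:ℝ)^k ≤ Real.exp ((11/60)*lam) := by
    calc (9:ℝ)^k ≤ Real.exp (11/5) ^ k := pow_le_pow_left₀ (by norm_num) exp_11_5 k
      _ = Real.exp ((k:ℝ)*(11/5)) := (Real.exp_nat_mul _ k).symm
      _ ≤ Real.exp ((11/60)*lam) := by
          apply Real.exp_le_exp.2; linarith
  have hsqrt : lam ^ ((1:ℝ)/2) ≤ lam := by
    calc lam ^ ((1:ℝ)/2) ≤ lam ^ (1:ℝ) :=
        Real.rpow_le_rpow_of_exponent_le (by linarith) (by norm_num)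
      _ = lam := Real.rpow_one lam
  have hlin : lam ≤ 480 * Real.exp ((1/480)*lam) := by
    have h := Real.add_one_le_exp ((1/480)*lam)
    nlinarith [Real.exp_pos ((1/480)*lam)]
  have main2 : (9:ℝ)^k * Real.exp (-(3/16) * lam) * lam ^ ((1:ℝ)/2)
      ≤ 480 * Real.exp (-(1/480) * lam) := by
    calc (9:ℝ)^k * Real.exp (-(3/16) * lam) * lam ^ ((1:ℝ)/2)
        ≤ Real.exp ((11/60)*lam) * Real.exp (-(3/16) * lam) * lam := by
          have h1 : (0:ℝ) ≤ Real.exp (-(3/16) * lam) := Real.exp_nonneg _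
          have h2 : (0:ℝ) ≤ lam ^ ((1:ℝ)/2) := Real.rpow_nonneg hl0.le _
          have := mul_le_mul h9k (le_refl (Real.exp (-(3/16) * lam))) h1 (Real.exp_nonneg _)
          exact mul_le_mul this hsqrt h2 (by positivity)
      _ = lam * Real.exp (-(1/240) * lam) := by
          rw [← Real.exp_add]; ring_nf
      _ ≤ (480 * Real.exp ((1/480)*lam)) * Real.exp (-(1/240) * lam) :=
          mul_le_mul_of_nonneg_right hlin (Real.exp_nonneg _)
      _ = 480 * Real.exp (-(1/480) * lam) := by
          rw [mul_assoc, ← Real.exp_add]; ring_nf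
  have hpos : (0:ℝ) < lam ^ ((1:ℝ)/2) := Real.rpow_pos_of_pos hl0 _
  have hhalf : lam ^ ((1:ℝ)/2) * lam ^ (-(1:ℝ)/2) = 1 := by
    rw [← Real.rpow_add hl0]; norm_num
  calc (9:ℝ)^k * Real.exp (-(3/16) * lam)
      = ((9:ℝ)^k * Real.exp (-(3/16) * lam) * lam ^ ((1:ℝ)/2)) * lam ^ (-(1:ℝ)/2) := by
        rw [mul_assoc, hhalf, mul_one]
    _ ≤ (480 * Real.exp (-(1/480) * lam)) * lam ^ (-(1:ℝ)/2) :=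
        mul_le_mul_of_nonneg_right main2 (Real.rpow_nonneg hl0.le _)
    _ = 480 * lam ^ (-(1:ℝ)/2) * Real.exp (-(1/480) * lam) := by ring

end ChiAuxiliary

open Finset Set

/-- Asymptotics of `χ̂_B` for `λ > 3ν`:
`χ̂_B(λ,k) = (−1)^k (sin λ/λ^{n+1}) 2^{(3n+1)/2}
 (1 + O(ν^{−(n−1)/2} λ^{n/2−1} e^{−cλ}))`. -/
theorem chiHatB_large_lambda (n : ℕ) (hn : 1 ≤ n) :
    ∃ C > (0 : ℝ), ∃ c > (0 : ℝ), ∀ (k : ℕ) (lam : ℝ), 3 * (nuv n k : ℝ) < lam →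
      |chiHatB n k lam -
          (-1) ^ k * (Real.sin lam / lam ^ (n + 1)) * (2 : ℝ) ^ ((3 * (n : ℝ) + 1) / 2)| ≤
        C * (|Real.sin lam| / lam ^ (n + 1)) * (nuv n k : ℝ) ^ (-((n : ℝ) - 1) / 2) *
          lam ^ ((n : ℝ) / 2 - 1) * Real.exp (-c * lam) := by
  refine ⟨(2:ℝ) ^ (((n:ℝ)+1)/2) * (8/3) * 8^(n-1) * 480, by positivity, 1/480, by norm_num, ?_⟩
  intro k lam hlam
  set ν : ℝ := (nuv n k : ℝ) with hνdef
  have hν2 : (2:ℝ) ≤ ν := by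
    rw [hνdef, nuv]
    have : (1:ℕ) ≤ n := hn
    push_cast
    nlinarith [Nat.cast_nonneg (α := ℝ) k, (Nat.one_le_cast.mpr hn : (1:ℝ) ≤ n)]
  have hν0 : (0:ℝ) < ν := by linarith
  have hl6 : (6:ℝ) < lam := by nlinarith
  have hl0 : (0:ℝ) < lam := by linarith
  have hk12 : 12*(k:ℝ) ≤ lam := by
    have h1 : (12:ℝ)*k ≤ 3*ν := by
      rw [hνdef, nuv]; push_cast; nlinarith [Nat.cast_nonneg (α := ℝ) n]
    linarith
  set m := k + (n-1) with hmdef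
  have hk0 : (k.factorial:ℝ) ≠ 0 := Nat.cast_ne_zero.2 (Nat.factorial_ne_zero _)
  have hm0 : (m.factorial:ℝ) ≠ 0 := Nat.cast_ne_zero.2 (Nat.factorial_ne_zero _)
  have hrk2 : rk n k * rk n k = (k.factorial:ℝ) / (m.factorial:ℝ) := by
    rw [rk, show n + k - 1 = m by omega]
    exact Real.mul_self_sqrt (by positivity)
  have hT : 0 < lam / (2*ν) := by positivity
  have hEq : Set.EqOn (fun t : ℝ => lagFun n k (ν*t) * t ^ (((n:ℝ)-1)/2))
      (fun t : ℝ => (rk n k * ν ^ (-(((n:ℝ)+1)/2)) * ν) * Gfun n k (ν*t))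
      (Set.Ioc 0 (lam/(2*ν))) := by
    intro t ht
    have ht0 : 0 < t := ht.1
    have hνt : 0 < ν * t := mul_pos hν0 ht0
    have key : (ν*t) ^ (((n:ℝ)-1)/2) * t ^ (((n:ℝ)-1)/2)
        = ν ^ (-(((n:ℝ)+1)/2)) * ν * (ν*t)^((n-1 : ℕ)) := by
      rw [← Real.rpow_natCast (ν*t) (n-1), Nat.cast_sub hn, Nat.cast_one,
        Real.mul_rpow hν0.le ht0.le, Real.mul_rpow hν0.le ht0.le]
      have e1 : t ^ (((n:ℝ)-1)/2) * t ^ (((n:ℝ)-1)/2) = t ^ ((n:ℝ)-1) := by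
        rw [← Real.rpow_add ht0]; congr 1; ring
      have e2 : ν ^ (-(((n:ℝ)+1)/2)) * ν * ν ^ ((n:ℝ)-1) = ν ^ (((n:ℝ)-1)/2) := by
        calc ν ^ (-(((n:ℝ)+1)/2)) * ν * ν ^ ((n:ℝ)-1)
            = ν ^ (-(((n:ℝ)+1)/2)) * ν ^ (1:ℝ) * ν ^ ((n:ℝ)-1) := by rw [Real.rpow_one]
          _ = ν ^ (-(((n:ℝ)+1)/2) + 1 + ((n:ℝ)-1)) := by
              rw [← Real.rpow_add hν0, ← Real.rpow_add hν0]
          _ = ν ^ (((n:ℝ)-1)/2) := by congr 1; ring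
      linear_combination ν ^ (((n:ℝ)-1)/2) * e1 - (t ^ ((n:ℝ)-1)) * e2
    simp only [lagFun, Gfun]
    rw [genLaguerre_eq n k hn hνt]
    have hP : (∑ j ∈ Finset.range (k+1),
        (-1:ℝ)^j * ((k+(n-1)).choose (k-j) : ℝ) / (j.factorial : ℝ) * (ν*t)^j)
        = Ppoly n k (ν*t) := rfl
    rw [hP]
    linear_combination (rk n k * Ppoly n k (ν*t) * Real.exp (-(ν*t)/2)) * key
  have hJ : (∫ t in (0:ℝ)..(lam/(2*ν)), lagFun n k (ν*t) * t ^ (((n:ℝ)-1)/2))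
      = rk n k * ν ^ (-(((n:ℝ)+1)/2)) *
        ((∫ s in Ioi (0:ℝ), Gfun n k s) - ∫ s in Ioi (lam/2), Gfun n k s) := by
    rw [intervalIntegral.integral_of_le hT.le,
      MeasureTheory.setIntegral_congr_fun measurableSet_Ioc hEq,
      MeasureTheory.integral_const_mul,
      ← intervalIntegral.integral_of_le hT.le,
      intervalIntegral.integral_comp_mul_left (fun s => Gfun n k s) hν0.ne',
      mul_zero, show ν * (lam/(2*ν)) = lam/2 by field_simp,
      smul_eq_mul, interval_eq_full_sub_tail n k (by positivity : (0:ℝ) ≤ lam/2)]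
    field_simp
  set Ifull := ∫ s in Ioi (0:ℝ), Gfun n k s with hIfulldef
  set Itail := ∫ s in Ioi (lam/2), Gfun n k s with hItaildef
  have h2pow : (2:ℝ) ^ (((n:ℝ)+1)/2) * (2:ℝ)^(n:ℕ) = (2:ℝ) ^ ((3*(n:ℝ)+1)/2) := by
    rw [← Real.rpow_natCast 2 n, ← Real.rpow_add (by norm_num : (0:ℝ) < 2)]
    congr 1; ring
  have hform : chiHatB n k lam
      = (Real.sin lam / lam ^ (n+1)) * (2:ℝ) ^ (((n:ℝ)+1)/2)
          * ((k.factorial:ℝ)/(m.factorial:ℝ)) * (Ifull - Itail) := by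
    rw [chiHatB, hJ, Real.mul_rpow (by norm_num : (0:ℝ) ≤ 2) hν0.le]
    have hcan : ν ^ (((n:ℝ)+1)/2) * ν ^ (-(((n:ℝ)+1)/2)) = 1 := by
      rw [← Real.rpow_add hν0]; simp
    calc rk n k * (Real.sin lam / lam ^ (n+1)) * (2^(((n:ℝ)+1)/2) * ν^(((n:ℝ)+1)/2))
          * (rk n k * ν ^ (-(((n:ℝ)+1)/2)) * (Ifull - Itail))
        = (Real.sin lam / lam ^ (n+1)) * 2^(((n:ℝ)+1)/2) * (rk n k * rk n k)
          * (ν^(((n:ℝ)+1)/2) * ν ^ (-(((n:ℝ)+1)/2))) * (Ifull - Itail) := by ring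
      _ = _ := by rw [hrk2, hcan]; ring
  have hIfullval : Ifull = (-1:ℝ)^k * 2^n * ((m.factorial):ℝ)/(k.factorial:ℝ) :=
    integral_Gfun n k hn
  have hM : (Real.sin lam / lam ^ (n+1)) * (2:ℝ) ^ (((n:ℝ)+1)/2)
      * ((k.factorial:ℝ)/(m.factorial:ℝ)) * Ifull
      = (-1) ^ k * (Real.sin lam / lam ^ (n + 1)) * (2 : ℝ) ^ ((3 * (n:ℝ) + 1) / 2) := by
    rw [hIfullval, ← h2pow]
    field_simp
  have hdiff : chiHatB n k lam
        - (-1) ^ k * (Real.sin lam / lam ^ (n + 1)) * (2:ℝ) ^ ((3*(n:ℝ)+1)/2)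
      = -((Real.sin lam / lam ^ (n+1)) * (2:ℝ) ^ (((n:ℝ)+1)/2)
          * ((k.factorial:ℝ)/(m.factorial:ℝ)) * Itail) := by
    rw [hform]; linear_combination hM
  rw [hdiff, _root_.abs_neg]
  have htail : |Itail| ≤ (8/3) * 8^(n-1) * 9^k * ((m.factorial:ℝ))/(k.factorial:ℝ)
      * Real.exp (-(3/16) * lam) := by
    have h := tail_bound n k (by positivity : (0:ℝ) ≤ lam/2)
    rw [show -(3/8) * (lam/2) = -(3/16) * lam by ring] at h
    exact h
  have hsin : |Real.sin lam / lam ^ (n+1)| = |Real.sin lam| / lam ^ (n+1) := by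
    rw [_root_.abs_div, _root_.abs_of_pos (pow_pos hl0 _)]
  have hAnn : (0:ℝ) ≤ (2:ℝ) ^ (((n:ℝ)+1)/2) * ((k.factorial:ℝ)/(m.factorial:ℝ)) := by positivity
  have habs : |(Real.sin lam / lam ^ (n+1)) * (2:ℝ) ^ (((n:ℝ)+1)/2)
      * ((k.factorial:ℝ)/(m.factorial:ℝ)) * Itail|
      = (|Real.sin lam| / lam ^ (n+1)) * (2:ℝ) ^ (((n:ℝ)+1)/2)
        * ((k.factorial:ℝ)/(m.factorial:ℝ)) * |Itail| := by
    rw [_root_.abs_mul, _root_.abs_mul, _root_.abs_mul, hsin,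
      _root_.abs_of_pos (Real.rpow_pos_of_pos (by norm_num : (0:ℝ) < 2) _),
      _root_.abs_of_pos (by positivity : (0:ℝ) < (k.factorial:ℝ)/(m.factorial:ℝ))]
  rw [habs]
  have hstep1 : (|Real.sin lam| / lam ^ (n+1)) * (2:ℝ) ^ (((n:ℝ)+1)/2)
        * ((k.factorial:ℝ)/(m.factorial:ℝ)) * |Itail|
      ≤ (|Real.sin lam| / lam ^ (n+1)) * ((2:ℝ) ^ (((n:ℝ)+1)/2) * (8/3) * 8^(n-1))
        * (9^k * Real.exp (-(3/16) * lam)) := by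
    calc (|Real.sin lam| / lam ^ (n+1)) * (2:ℝ) ^ (((n:ℝ)+1)/2)
        * ((k.factorial:ℝ)/(m.factorial:ℝ)) * |Itail|
        ≤ (|Real.sin lam| / lam ^ (n+1)) * (2:ℝ) ^ (((n:ℝ)+1)/2)
          * ((k.factorial:ℝ)/(m.factorial:ℝ))
          * ((8/3) * 8^(n-1) * 9^k * ((m.factorial:ℝ))/(k.factorial:ℝ)
            * Real.exp (-(3/16) * lam)) :=
          mul_le_mul_of_nonneg_left htail (by positivity)
      _ = (|Real.sin lam| / lam ^ (n+1)) * ((2:ℝ) ^ (((n:ℝ)+1)/2) * (8/3) * 8^(n-1))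
          * (9^k * Real.exp (-(3/16) * lam)) := by
          field_simp
  have hnum := final_num (le_of_lt hl6) hk12
  have hstep2 : (|Real.sin lam| / lam ^ (n+1)) * ((2:ℝ) ^ (((n:ℝ)+1)/2) * (8/3) * 8^(n-1))
        * (9^k * Real.exp (-(3/16) * lam))
      ≤ (|Real.sin lam| / lam ^ (n+1)) * ((2:ℝ) ^ (((n:ℝ)+1)/2) * (8/3) * 8^(n-1))
        * (480 * lam ^ (-(1:ℝ)/2) * Real.exp (-(1/480) * lam)) :=
    mul_le_mul_of_nonneg_left hnum (by positivity)
  have hsplitpow : lam ^ (-(1:ℝ)/2)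
      = lam ^ (-((n:ℝ)-1)/2) * lam ^ ((n:ℝ)/2 - 1) := by
    rw [← Real.rpow_add hl0]; congr 1; ring
  have hmono : lam ^ (-((n:ℝ)-1)/2) ≤ ν ^ (-((n:ℝ)-1)/2) := by
    rw [show -((n:ℝ)-1)/2 = -(((n:ℝ)-1)/2) by ring, Real.rpow_neg hν0.le,
      Real.rpow_neg hl0.le]
    have hexp : (0:ℝ) ≤ ((n:ℝ)-1)/2 := by
      have : (1:ℝ) ≤ (n:ℝ) := Nat.one_le_cast.2 hn
      linarith
    exact inv_anti₀ (Real.rpow_pos_of_pos hν0 _)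
      (Real.rpow_le_rpow hν0.le (by linarith) hexp)
  have hstep3 : (|Real.sin lam| / lam ^ (n+1)) * ((2:ℝ) ^ (((n:ℝ)+1)/2) * (8/3) * 8^(n-1))
        * (480 * lam ^ (-(1:ℝ)/2) * Real.exp (-(1/480) * lam))
      ≤ (2:ℝ) ^ (((n:ℝ)+1)/2) * (8/3) * 8^(n-1) * 480 * (|Real.sin lam| / lam ^ (n+1))
        * ν ^ (-((n:ℝ)-1)/2) * lam ^ ((n:ℝ)/2 - 1) * Real.exp (-(1/480) * lam) := by
    rw [hsplitpow]
    have hrest : (0:ℝ) ≤ (|Real.sin lam| / lam ^ (n+1))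
        * ((2:ℝ) ^ (((n:ℝ)+1)/2) * (8/3) * 8^(n-1)) * 480
        * lam ^ ((n:ℝ)/2 - 1) * Real.exp (-(1/480) * lam) := by positivity
    calc (|Real.sin lam| / lam ^ (n+1)) * ((2:ℝ) ^ (((n:ℝ)+1)/2) * (8/3) * 8^(n-1))
          * (480 * (lam ^ (-((n:ℝ)-1)/2) * lam ^ ((n:ℝ)/2 - 1)) * Real.exp (-(1/480) * lam))
        = ((|Real.sin lam| / lam ^ (n+1)) * ((2:ℝ) ^ (((n:ℝ)+1)/2) * (8/3) * 8^(n-1)) * 480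
          * lam ^ ((n:ℝ)/2 - 1) * Real.exp (-(1/480) * lam)) * lam ^ (-((n:ℝ)-1)/2) := by ring
      _ ≤ ((|Real.sin lam| / lam ^ (n+1)) * ((2:ℝ) ^ (((n:ℝ)+1)/2) * (8/3) * 8^(n-1)) * 480
          * lam ^ ((n:ℝ)/2 - 1) * Real.exp (-(1/480) * lam)) * ν ^ (-((n:ℝ)-1)/2) :=
          mul_le_mul_of_nonneg_left hmono hrest
      _ = (2:ℝ) ^ (((n:ℝ)+1)/2) * (8/3) * 8^(n-1) * 480 * (|Real.sin lam| / lam ^ (n+1))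
          * ν ^ (-((n:ℝ)-1)/2) * lam ^ ((n:ℝ)/2 - 1) * Real.exp (-(1/480) * lam) := by ring
  linarith [hstep1, hstep2, hstep3]
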